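/- (Zero-level quantum reflection equation.) Let T⁺₀ and T⁻₁ be n₂×n₁ matrices over A satisfying the homogeneous exchange relations R_{n₂}·(X⊠Y) = (X⊠'Y)·R_{n₁} and (R̄_{n₂})ᵀ·(X⊠Y) = (X⊠'Y)·(R̄_{n₁})ᵀ for each of the pairs (X,Y) = (T⁺₀,T⁺₀), (T⁻₁,T⁻₁), (T⁻₁,T⁺₀). Then the n₁×n₁ matrix A₀ := (T⁻₁)ᵀ·T⁺₀ satisfies the quantum reflection equation R·(A₀⊠1)·R^{t1}·(1⊠A₀) = (1⊠A₀)·R^{t1}·(A₀⊠1)·R, where R := R_{n₁} and 1 is the n₁×n₁ identity matrix. -/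

import Mathlib

open Matrix

variable {A : Type*} [Ring A]

/-- Kulish–Sklyanin trigonometric R-matrix with deformation parameter `q`
(`qi` denotes the inverse of `q`). -/
def Rmat (A : Type*) [Ring A] (q qi : A) (n : ℕ) :
    Matrix (Fin n × Fin n) (Fin n × Fin n) A := fun x y =>
  if x.1 = x.2 ∧ x.2 = y.1 ∧ y.1 = y.2 then q
  else if x.1 = y.1 ∧ x.2 = y.2 then 1
  else if x.1 = y.2 ∧ x.2 = y.1 ∧ x.2 < x.1 then q - qi
  else 0

/-- Permutation-type matrix with (possibly) rectangular tensor indices. -/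
def PmatG (A : Type*) [Ring A] (m n : ℕ) :
    Matrix (Fin m × Fin n) (Fin n × Fin m) A := fun x y =>
  if x.1 = y.2 ∧ x.2 = y.1 then 1 else 0

/-- The permutation matrix `P`. -/
def Pmat (A : Type*) [Ring A] (n : ℕ) :
    Matrix (Fin n × Fin n) (Fin n × Fin n) A := PmatG A n n

/-- Kronecker product `X ⊠ Y` : entry at `((i,a),(j,b))` is `X i j * Y a b`. -/
def kron {I J K L : Type*} (X : Matrix I J A) (Y : Matrix K L A) :
    Matrix (I × K) (J × L) A := fun p r => X p.1 r.1 * Y p.2 r.2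

/-- Opposite-order Kronecker product `X ⊠' Y` : entry at `((i,a),(j,b))` is `Y a b * X i j`. -/
def kron' {I J K L : Type*} (X : Matrix I J A) (Y : Matrix K L A) :
    Matrix (I × K) (J × L) A := fun p r => Y p.2 r.2 * X p.1 r.1

/-- Partial transposition in the first tensor factor: `Z^{t1}((i,a),(j,b)) = Z((j,a),(i,b))`. -/
def ptrans {n : ℕ} (Z : Matrix (Fin n × Fin n) (Fin n × Fin n) A) :
    Matrix (Fin n × Fin n) (Fin n × Fin n) A := fun x y => Z (y.1, x.2) (x.1, y.2)


set_option linter.unusedSectionVars false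

section KronLemmas
variable {I J K L M N : Type*} [Fintype I] [Fintype J] [Fintype K] [Fintype L]
  [DecidableEq I] [DecidableEq J] [DecidableEq K] [DecidableEq L]

lemma kron_one_mul_one_kron (X : Matrix I J A) (Y : Matrix K L A) :
    kron X (1 : Matrix K K A) * kron (1 : Matrix J J A) Y = kron X Y := by
  ext ⟨i, k⟩ ⟨j, l⟩
  simp only [mul_apply, kron, Fintype.sum_prod_type, one_apply, mul_ite, ite_mul,
    mul_one, one_mul, mul_zero, zero_mul, Finset.sum_ite_eq, Finset.sum_ite_eq',
    Finset.mem_univ, if_true]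
  rw [Finset.sum_comm]
  simp

lemma one_kron_mul_kron_one (X : Matrix I J A) (Y : Matrix K L A) :
    kron (1 : Matrix I I A) Y * kron X (1 : Matrix L L A) = kron' X Y := by
  ext ⟨i, k⟩ ⟨j, l⟩
  simp only [mul_apply, kron, kron', Fintype.sum_prod_type, one_apply, mul_ite, ite_mul,
    mul_one, one_mul, mul_zero, zero_mul, Finset.sum_ite_eq, Finset.sum_ite_eq',
    Finset.mem_univ, if_true]

lemma kron_one_mul_kron_one (X : Matrix I J A) (Z : Matrix J K A) :
    kron X (1 : Matrix L L A) * kron Z (1 : Matrix L L A) = kron (X * Z) (1 : Matrix L L A) := by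
  ext ⟨i, k⟩ ⟨j, l⟩
  simp only [mul_apply, kron, Fintype.sum_prod_type, one_apply, mul_ite, ite_mul,
    mul_one, one_mul, mul_zero, zero_mul, Finset.sum_ite_eq, Finset.sum_ite_eq',
    Finset.mem_univ, if_true]
  by_cases h : k = l <;> simp [h, Finset.sum_mul]

lemma one_kron_mul_one_kron (Y : Matrix I J A) (W : Matrix J K A) :
    kron (1 : Matrix L L A) Y * kron (1 : Matrix L L A) W = kron (1 : Matrix L L A) (Y * W) := by
  ext ⟨i, k⟩ ⟨j, l⟩
  simp only [mul_apply, kron, Fintype.sum_prod_type, one_apply, mul_ite, ite_mul,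
    mul_one, one_mul, mul_zero, zero_mul, Finset.sum_ite_eq, Finset.sum_ite_eq',
    Finset.mem_univ, if_true]
  by_cases h : i = j <;> simp [h]

lemma kron_transpose (X : Matrix I J A) (Y : Matrix K L A) :
    (kron X Y)ᵀ = kron Xᵀ Yᵀ := rfl

lemma kron'_transpose (X : Matrix I J A) (Y : Matrix K L A) :
    (kron' X Y)ᵀ = kron' Xᵀ Yᵀ := rfl

end KronLemmas

section CentLemmas
variable {I J K : Type*} [Fintype J]

def Cent {I J : Type*} (M : Matrix I J A) : Prop := ∀ i j a, Commute (M i j) a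

lemma cent_transpose {M : Matrix I J A} (h : Cent M) : Cent Mᵀ := fun i j a => h j i a

lemma cent_Rmat {q qi : A} (hq : ∀ a : A, Commute q a) (hqi : ∀ a : A, Commute qi a)
    (n : ℕ) : Cent (Rmat A q qi n) := by
  intro x y a
  unfold Rmat
  split_ifs
  · exact hq a
  · exact Commute.one_left a
  · exact ((hq a).sub_left (hqi a))
  · exact Commute.zero_left a

lemma mul_central_transpose (M : Matrix I J A) (R : Matrix J K A) (hR : Cent R) :
    (M * R)ᵀ = Rᵀ * Mᵀ := by
  ext k i
  simp only [transpose_apply, mul_apply]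
  exact Finset.sum_congr rfl fun j _ => ((hR j k (M i j)).eq).symm

lemma central_mul_transpose (R : Matrix I J A) (M : Matrix J K A) (hR : Cent R) :
    (R * M)ᵀ = Mᵀ * Rᵀ := by
  ext k i
  simp only [transpose_apply, mul_apply]
  exact Finset.sum_congr rfl fun j _ => (hR i j (M j k)).eq

end CentLemmas

section RmatLemmas
variable (q qi : A) (n : ℕ)

lemma Rmat_apply (x y : Fin n × Fin n) :
    Rmat A q qi n x y =
      if y = x then (if x.1 = x.2 then q else 1)
      else if y = (x.2, x.1) ∧ x.2 < x.1 then q - qi else 0 := by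
  obtain ⟨x1, x2⟩ := x
  obtain ⟨y1, y2⟩ := y
  unfold Rmat
  simp only [Prod.mk.injEq, Prod.ext_iff]
  split_ifs <;> first | rfl | (exfalso; omega)

lemma ptrans_Rmat_apply (x y : Fin n × Fin n) :
    ptrans (Rmat A q qi n) x y =
      if y = x then (if x.1 = x.2 then q else 1)
      else if x.1 = x.2 ∧ y.1 = y.2 ∧ x.1 < y.1 then q - qi else 0 := by
  obtain ⟨x1, x2⟩ := x
  obtain ⟨y1, y2⟩ := y
  unfold ptrans Rmat
  simp only [Prod.mk.injEq, Prod.ext_iff]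
  split_ifs <;> first | rfl | (exfalso; omega)

lemma sum_two_support {α β : Type*} [Fintype α] [DecidableEq α] [AddCommMonoid β]
    (f : α → β) (y1 y2 : α) (h12 : y1 ≠ y2) (h : ∀ y, y ≠ y1 → y ≠ y2 → f y = 0) :
    (∑ y, f y) = f y1 + f y2 := by
  rw [← Finset.sum_pair h12]
  apply (Finset.sum_subset (Finset.subset_univ _) _).symm
  intro y _ hy
  simp only [Finset.mem_insert, Finset.mem_singleton, not_or] at hy
  exact h y hy.1 hy.2

lemma Rmat_mul_apply {m : Type*} [Fintype m] (B : Matrix (Fin n × Fin n) m A)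
    (x : Fin n × Fin n) (z : m) :
    (Rmat A q qi n * B) x z =
      if x.1 = x.2 then q * B x z
      else B x z + (if x.2 < x.1 then (q - qi) * B (x.2, x.1) z else 0) := by
  rw [mul_apply]
  by_cases hd : x.1 = x.2
  · rw [if_pos hd, Finset.sum_eq_single x]
    · rw [Rmat_apply, if_pos rfl, if_pos hd]
    · intro y _ hy
      rw [Rmat_apply]
      rw [if_neg hy, if_neg, zero_mul]
      rintro ⟨-, h2⟩
      exact absurd hd (by omega)
    · intro h; exact absurd (Finset.mem_univ x) h
  · rw [if_neg hd]
    by_cases hlt : x.2 < x.1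
    · rw [if_pos hlt]
      have hne : x ≠ (x.2, x.1) := by
        intro h; exact hd (congrArg Prod.fst h)
      rw [sum_two_support _ x (x.2, x.1) hne]
      · rw [Rmat_apply, if_pos rfl, if_neg hd, Rmat_apply, if_neg (Ne.symm hne),
          if_pos ⟨rfl, hlt⟩, one_mul]
      · intro y hy1 hy2
        rw [Rmat_apply, if_neg hy1, if_neg, zero_mul]
        rintro ⟨h1, -⟩; exact hy2 h1
    · rw [if_neg hlt, add_zero, Finset.sum_eq_single x]
      · rw [Rmat_apply, if_pos rfl, if_neg hd, one_mul]
      · intro y _ hy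
        rw [Rmat_apply, if_neg hy, if_neg, zero_mul]
        rintro ⟨-, h2⟩; exact hlt h2
      · intro h; exact absurd (Finset.mem_univ x) h

lemma mul_Rmat_apply {m : Type*} [Fintype m] (B : Matrix m (Fin n × Fin n) A)
    (x : m) (z : Fin n × Fin n) :
    (B * Rmat A q qi n) x z =
      if z.1 = z.2 then B x z * q
      else B x z + (if z.1 < z.2 then B x (z.2, z.1) * (q - qi) else 0) := by
  rw [mul_apply]
  have key : ∀ y : Fin n × Fin n, y ≠ z → y ≠ (z.2, z.1) → Rmat A q qi n y z = 0 := by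
    intro y hy1 hy2
    rw [Rmat_apply, if_neg (Ne.symm hy1), if_neg]
    rintro ⟨h1, -⟩
    exact hy2 (by rw [h1])
  by_cases hd : z.1 = z.2
  · rw [if_pos hd, Finset.sum_eq_single z]
    · rw [Rmat_apply, if_pos rfl, if_pos hd]
    · intro y _ hy
      rcases eq_or_ne y (z.2, z.1) with h | h
      · exact absurd (h.trans (Prod.ext hd.symm hd)) hy
      · rw [key y hy h, mul_zero]
    · intro h; exact absurd (Finset.mem_univ z) h
  · rw [if_neg hd]
    by_cases hlt : z.1 < z.2
    · rw [if_pos hlt]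
      have hne : z ≠ (z.2, z.1) := fun h => hd (congrArg Prod.fst h)
      rw [sum_two_support _ z (z.2, z.1) hne]
      · rw [Rmat_apply, if_pos rfl, if_neg hd, mul_one, Rmat_apply, if_neg, if_pos]
        · exact ⟨rfl, hlt⟩
        · exact fun h => hd (congrArg Prod.snd h).symm
      · intro y hy1 hy2
        rw [key y hy1 hy2, mul_zero]
    · rw [if_neg hlt, add_zero, Finset.sum_eq_single z]
      · rw [Rmat_apply, if_pos rfl, if_neg hd, mul_one]
      · intro y _ hy
        rcases eq_or_ne y (z.2, z.1) with h | h
        · subst h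
          rw [Rmat_apply, if_neg (Ne.symm hy), if_neg (by rintro ⟨-, h2⟩; exact hlt h2),
            mul_zero]
        · rw [key y hy h, mul_zero]
      · intro h; exact absurd (Finset.mem_univ z) h

end RmatLemmas

section PmatLemmas
variable (q qi : A) {m n : ℕ}

lemma Pmat_mul_apply {C : Type*} (Z : Matrix (Fin n × Fin n) C A)
    (x : Fin n × Fin n) (y : C) :
    (Pmat A n * Z) x y = Z (x.2, x.1) y := by
  rw [mul_apply, Finset.sum_eq_single (x.2, x.1)]
  · rw [show Pmat A n x (x.2, x.1) = 1 by simp [Pmat, PmatG], one_mul]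
  · intro w _ hw
    rw [show Pmat A n x w = 0 by
      simp only [Pmat, PmatG, ite_eq_right_iff]
      rintro ⟨h1, h2⟩
      exact absurd (Prod.ext h2.symm h1.symm : w = (x.2, x.1)) hw, zero_mul]
  · intro h; exact absurd (Finset.mem_univ _) h

lemma mul_Pmat_apply {C : Type*} [Fintype C] (Z : Matrix C (Fin n × Fin n) A)
    (x : C) (y : Fin n × Fin n) :
    (Z * Pmat A n) x y = Z x (y.2, y.1) := by
  rw [mul_apply, Finset.sum_eq_single (y.2, y.1)]
  · rw [show Pmat A n (y.2, y.1) y = 1 by simp [Pmat, PmatG], mul_one]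
  · intro w _ hw
    rw [show Pmat A n w y = 0 by
      simp only [Pmat, PmatG, ite_eq_right_iff]
      rintro ⟨h1, h2⟩
      exact absurd (Prod.ext h1 h2 : w = (y.2, y.1)) hw, mul_zero]
  · intro h; exact absurd (Finset.mem_univ _) h

lemma Pmat_conj_kron (X : Matrix (Fin m) (Fin n) A) (Y : Matrix (Fin m) (Fin n) A) :
    Pmat A m * kron X Y * Pmat A n = kron' Y X := by
  ext x y
  rw [mul_Pmat_apply, Pmat_mul_apply]
  rfl

lemma Pmat_conj_kron' (X : Matrix (Fin m) (Fin n) A) (Y : Matrix (Fin m) (Fin n) A) :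
    Pmat A m * kron' X Y * Pmat A n = kron Y X := by
  ext x y
  rw [mul_Pmat_apply, Pmat_mul_apply]
  rfl

lemma Pmat_conj_Rmat :
    Pmat A n * Rmat A q qi n * Pmat A n = (Rmat A q qi n)ᵀ := by
  ext x y
  rw [mul_Pmat_apply, Pmat_mul_apply, transpose_apply]
  obtain ⟨x1, x2⟩ := x
  obtain ⟨y1, y2⟩ := y
  unfold Rmat
  dsimp only
  split_ifs <;> first | rfl | (exfalso; omega)

lemma Pmat_mul_Pmat : Pmat A n * Pmat A n = 1 := by
  ext x y
  rw [Pmat_mul_apply]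
  simp [Pmat, PmatG, one_apply, Prod.ext_iff, and_comm]

lemma Pmat_conj_Rmat' :
    Pmat A n * (Rmat A q qi n)ᵀ * Pmat A n = Rmat A q qi n := by
  rw [← Pmat_conj_Rmat q qi]
  rw [show Pmat A n * (Pmat A n * Rmat A q qi n * Pmat A n) * Pmat A n
      = Pmat A n * Pmat A n * Rmat A q qi n * (Pmat A n * Pmat A n) by
        simp only [mul_assoc], Pmat_mul_Pmat, one_mul, mul_one]

lemma conj_split {I J K L M : Type*} [Fintype I] [Fintype J] [Fintype K] [DecidableEq J]
    (P : Matrix L I A) (Q : Matrix J J A) (Pk : Matrix K M A)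
    (M1 : Matrix I J A) (N : Matrix J K A) (hQ : Q * Q = 1) :
    P * (M1 * N) * Pk = (P * M1 * Q) * (Q * N * Pk) := by
  have h : (P * M1 * Q) * (Q * N * Pk) = P * (M1 * N) * Pk := by
    simp only [Matrix.mul_assoc]
    rw [← Matrix.mul_assoc Q Q, hQ, Matrix.one_mul]
  exact h.symm

lemma Rmat_mul_Rmat_inv (hqinv : q * qi = 1) (hqinv' : qi * q = 1) :
    Rmat A q qi n * Rmat A qi q n = 1 := by
  ext x z
  rw [Rmat_mul_apply, Rmat_apply, Rmat_apply, one_apply]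
  obtain ⟨x1, x2⟩ := x
  obtain ⟨z1, z2⟩ := z
  simp only [Prod.mk.injEq, Prod.ext_iff]
  split_ifs <;>
    first
    | rfl
    | (exfalso; omega)
    | rw [hqinv]
    | (simp only [mul_zero, zero_mul, mul_one, one_mul, add_zero, zero_add] <;>
       first | rfl | abel)

lemma Rmat_comm_ptrans (hq : ∀ a : A, Commute q a) (hqi : ∀ a : A, Commute qi a) :
    Rmat A q qi n * ptrans (Rmat A q qi n) = ptrans (Rmat A q qi n) * Rmat A q qi n := by
  ext x z
  rw [Rmat_mul_apply, mul_Rmat_apply]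
  simp only [ptrans_Rmat_apply]
  obtain ⟨x1, x2⟩ := x
  obtain ⟨z1, z2⟩ := z
  simp only [Prod.mk.injEq, Prod.ext_iff]
  split_ifs <;>
    first
    | rfl
    | (exfalso; omega)
    | (exact (hq _).eq)
    | (exact ((hq _).sub_left (hqi _)).eq)
    | (exact (((hq _).sub_left (hqi _)).symm).eq)
    | (simp only [mul_zero, zero_mul, mul_one, one_mul, add_zero, zero_add] <;>
       first
       | rfl
       | (exact (hq _).eq)
       | (exact ((hq _).sub_left (hqi _)).eq)
       | (exact (((hq _).sub_left (hqi _)).symm).eq)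
       | abel)

end PmatLemmas

section Exchange
variable {n₁ n₂ : ℕ}

lemma exchange_t1 (R : Matrix (Fin n₁ × Fin n₁) (Fin n₁ × Fin n₁) A)
    (S : Matrix (Fin n₂ × Fin n₂) (Fin n₂ × Fin n₂) A)
    (hR : Cent R) (hS : Cent S)
    (X Y : Matrix (Fin n₁) (Fin n₂) A)
    (h : R * kron X Y = kron' X Y * S) :
    kron Xᵀ (1 : Matrix (Fin n₁) (Fin n₁) A) * ptrans R *
        kron (1 : Matrix (Fin n₁) (Fin n₁) A) Y =
      kron (1 : Matrix (Fin n₂) (Fin n₂) A) Y * ptrans S *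
        kron Xᵀ (1 : Matrix (Fin n₂) (Fin n₂) A) := by
  have sub1 : ∀ (α β : Fin n₂) (a j : Fin n₁),
      (kron Xᵀ (1 : Matrix (Fin n₁) (Fin n₁) A) * ptrans R *
        kron (1 : Matrix (Fin n₁) (Fin n₁) A) Y) (α, a) (j, β) =
      (R * kron X Y) (j, a) (α, β) := by
    intro α β a j
    simp only [mul_apply, kron, ptrans, one_apply, Fintype.sum_prod_type,
      transpose_apply, mul_ite, ite_mul, mul_one, one_mul, mul_zero, zero_mul,
      Finset.sum_ite_eq, Finset.sum_ite_eq', Finset.mem_univ, if_true]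
    rw [Finset.sum_comm]
    simp only [Finset.sum_ite_eq', Finset.mem_univ, if_true, Finset.sum_mul]
    rw [Finset.sum_comm]
    exact Finset.sum_congr rfl fun k _ => Finset.sum_congr rfl fun d _ => by
      rw [← (hR (j, a) (k, d) (X k α)).eq, mul_assoc]
  have sub2 : ∀ (α β : Fin n₂) (a j : Fin n₁),
      (kron (1 : Matrix (Fin n₂) (Fin n₂) A) Y * ptrans S *
        kron Xᵀ (1 : Matrix (Fin n₂) (Fin n₂) A)) (α, a) (j, β) =
      (kron' X Y * S) (j, a) (α, β) := by
    intro α β a j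
    simp only [mul_apply, kron, kron', ptrans, one_apply, Fintype.sum_prod_type,
      transpose_apply, mul_ite, ite_mul, mul_one, one_mul, mul_zero, zero_mul,
      Finset.sum_ite_eq, Finset.sum_ite_eq', Finset.mem_univ, if_true]
    simp only [Finset.sum_ite_irrel, Finset.sum_const_zero, Finset.sum_ite_eq,
      Finset.mem_univ, if_true, Finset.sum_mul]
    exact Finset.sum_congr rfl fun e _ => Finset.sum_congr rfl fun d _ => by
      rw [mul_assoc, (hS (e, d) (α, β) (X j e)).eq, ← mul_assoc]
  ext ⟨α, a⟩ ⟨j, β⟩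
  rw [sub1, sub2, h]

end Exchange


/-- the zero-level combination `A₀ = (T⁻₁)ᵀ·T⁺₀` satisfies the quantum
reflection equation. -/
theorem stmt8 (q qi : A) (hq : ∀ a : A, Commute q a) (hqi : ∀ a : A, Commute qi a)
    (hqinv : q * qi = 1) (hqinv' : qi * q = 1)
    (n₁ n₂ : ℕ) (hn₁ : 1 ≤ n₁) (hn₂ : 1 ≤ n₂)
    (Tp0 Tm1 : Matrix (Fin n₂) (Fin n₁) A)
    (h1 : Rmat A q qi n₂ * kron Tp0 Tp0 = kron' Tp0 Tp0 * Rmat A q qi n₁)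
    (h1' : (Rmat A qi q n₂)ᵀ * kron Tp0 Tp0 = kron' Tp0 Tp0 * (Rmat A qi q n₁)ᵀ)
    (h2 : Rmat A q qi n₂ * kron Tm1 Tm1 = kron' Tm1 Tm1 * Rmat A q qi n₁)
    (h2' : (Rmat A qi q n₂)ᵀ * kron Tm1 Tm1 = kron' Tm1 Tm1 * (Rmat A qi q n₁)ᵀ)
    (h3 : Rmat A q qi n₂ * kron Tm1 Tp0 = kron' Tm1 Tp0 * Rmat A q qi n₁)
    (h3' : (Rmat A qi q n₂)ᵀ * kron Tm1 Tp0 = kron' Tm1 Tp0 * (Rmat A qi q n₁)ᵀ) :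
    Rmat A q qi n₁ * kron (Tm1ᵀ * Tp0) (1 : Matrix (Fin n₁) (Fin n₁) A) *
        ptrans (Rmat A q qi n₁) * kron (1 : Matrix (Fin n₁) (Fin n₁) A) (Tm1ᵀ * Tp0) =
      kron (1 : Matrix (Fin n₁) (Fin n₁) A) (Tm1ᵀ * Tp0) * ptrans (Rmat A q qi n₁) *
        kron (Tm1ᵀ * Tp0) (1 : Matrix (Fin n₁) (Fin n₁) A) * Rmat A q qi n₁ := by
  have cR1 : Cent (Rmat A q qi n₁) := cent_Rmat hq hqi n₁
  have cR2 : Cent (Rmat A q qi n₂) := cent_Rmat hq hqi n₂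
  have cRb1 : Cent (Rmat A qi q n₁) := cent_Rmat hqi hq n₁
  have cRb2 : Cent (Rmat A qi q n₂) := cent_Rmat hqi hq n₂
  -- transposed mixed relation
  have t3 : kron Tm1ᵀ Tp0ᵀ * (Rmat A q qi n₂)ᵀ = (Rmat A q qi n₁)ᵀ * kron' Tm1ᵀ Tp0ᵀ := by
    have h := congrArg Matrix.transpose h3
    rwa [central_mul_transpose _ _ cR2, mul_central_transpose _ _ cR1,
      kron_transpose, kron'_transpose] at h
  -- swapped mixed relation (conjugation by P)
  have h4 : Rmat A q qi n₁ * kron Tp0ᵀ Tm1ᵀ = kron' Tp0ᵀ Tm1ᵀ * Rmat A q qi n₂ := by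
    have h : Pmat A n₁ * (kron Tm1ᵀ Tp0ᵀ * (Rmat A q qi n₂)ᵀ) * Pmat A n₂ =
        Pmat A n₁ * ((Rmat A q qi n₁)ᵀ * kron' Tm1ᵀ Tp0ᵀ) * Pmat A n₂ := by rw [t3]
    rw [conj_split (Pmat A n₁) (Pmat A n₂) (Pmat A n₂) _ _ Pmat_mul_Pmat,
      conj_split (Pmat A n₁) (Pmat A n₁) (Pmat A n₂) _ _ Pmat_mul_Pmat,
      Pmat_conj_kron, Pmat_conj_kron', Pmat_conj_Rmat', Pmat_conj_Rmat'] at h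
    exact h.symm
  -- transposed T⁻T⁻ relation
  have t2 : kron Tm1ᵀ Tm1ᵀ * Rmat A qi q n₂ = Rmat A qi q n₁ * kron' Tm1ᵀ Tm1ᵀ := by
    have h := congrArg Matrix.transpose h2'
    rwa [central_mul_transpose _ _ (cent_transpose cRb2),
      mul_central_transpose _ _ (cent_transpose cRb1), transpose_transpose,
      transpose_transpose, kron_transpose, kron'_transpose] at h
  have hTT : Rmat A q qi n₁ * kron Tm1ᵀ Tm1ᵀ = kron' Tm1ᵀ Tm1ᵀ * Rmat A q qi n₂ := by
    have h : Rmat A q qi n₁ * (kron Tm1ᵀ Tm1ᵀ * Rmat A qi q n₂) * Rmat A q qi n₂ =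
        Rmat A q qi n₁ * (Rmat A qi q n₁ * kron' Tm1ᵀ Tm1ᵀ) * Rmat A q qi n₂ := by rw [t2]
    simp only [Matrix.mul_assoc] at h
    rw [Rmat_mul_Rmat_inv qi q hqinv' hqinv, Matrix.mul_one,
      ← Matrix.mul_assoc (Rmat A q qi n₁) (Rmat A qi q n₁),
      Rmat_mul_Rmat_inv q qi hqinv hqinv', Matrix.one_mul] at h
    exact h
  -- the two partial-transpose exchange relations
  have L4 := exchange_t1 (Rmat A q qi n₁) (Rmat A q qi n₂) cR1 cR2 Tp0ᵀ Tm1ᵀ h4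
  rw [transpose_transpose] at L4
  have L3 := exchange_t1 (Rmat A q qi n₂) (Rmat A q qi n₁) cR2 cR1 Tm1 Tp0 h3
  have s1 : kron (Tm1ᵀ * Tp0) (1 : Matrix (Fin n₁) (Fin n₁) A)
      = kron Tm1ᵀ (1 : Matrix (Fin n₁) (Fin n₁) A) *
        kron Tp0 (1 : Matrix (Fin n₁) (Fin n₁) A) := (kron_one_mul_kron_one Tm1ᵀ Tp0).symm
  have s2 : kron (1 : Matrix (Fin n₁) (Fin n₁) A) (Tm1ᵀ * Tp0)
      = kron (1 : Matrix (Fin n₁) (Fin n₁) A) Tm1ᵀ *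
        kron (1 : Matrix (Fin n₁) (Fin n₁) A) Tp0 := (one_kron_mul_one_kron Tm1ᵀ Tp0).symm
  calc Rmat A q qi n₁ * kron (Tm1ᵀ * Tp0) (1 : Matrix (Fin n₁) (Fin n₁) A) *
        ptrans (Rmat A q qi n₁) * kron (1 : Matrix (Fin n₁) (Fin n₁) A) (Tm1ᵀ * Tp0)
      = Rmat A q qi n₁ * kron Tm1ᵀ (1 : Matrix (Fin n₁) (Fin n₁) A) *
        (kron Tp0 (1 : Matrix (Fin n₁) (Fin n₁) A) * ptrans (Rmat A q qi n₁) *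
          kron (1 : Matrix (Fin n₁) (Fin n₁) A) Tm1ᵀ) *
        kron (1 : Matrix (Fin n₁) (Fin n₁) A) Tp0 := by
        rw [s1, s2]; simp only [Matrix.mul_assoc]
    _ = Rmat A q qi n₁ * kron Tm1ᵀ (1 : Matrix (Fin n₁) (Fin n₁) A) *
        (kron (1 : Matrix (Fin n₂) (Fin n₂) A) Tm1ᵀ * ptrans (Rmat A q qi n₂) *
          kron Tp0 (1 : Matrix (Fin n₂) (Fin n₂) A)) *
        kron (1 : Matrix (Fin n₁) (Fin n₁) A) Tp0 := by rw [L4]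
    _ = Rmat A q qi n₁ * kron Tm1ᵀ Tm1ᵀ * ptrans (Rmat A q qi n₂) * kron Tp0 Tp0 := by
        rw [← kron_one_mul_one_kron Tm1ᵀ Tm1ᵀ, ← kron_one_mul_one_kron Tp0 Tp0]
        simp only [Matrix.mul_assoc]
    _ = kron' Tm1ᵀ Tm1ᵀ * Rmat A q qi n₂ * ptrans (Rmat A q qi n₂) * kron Tp0 Tp0 := by
        rw [hTT]
    _ = kron' Tm1ᵀ Tm1ᵀ * ptrans (Rmat A q qi n₂) * Rmat A q qi n₂ * kron Tp0 Tp0 := by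
        rw [Matrix.mul_assoc (kron' Tm1ᵀ Tm1ᵀ), Rmat_comm_ptrans q qi hq hqi, ← Matrix.mul_assoc]
    _ = kron' Tm1ᵀ Tm1ᵀ * ptrans (Rmat A q qi n₂) * (kron' Tp0 Tp0 * Rmat A q qi n₁) := by
        rw [Matrix.mul_assoc, h1]
    _ = kron (1 : Matrix (Fin n₁) (Fin n₁) A) Tm1ᵀ *
        (kron Tm1ᵀ (1 : Matrix (Fin n₂) (Fin n₂) A) * ptrans (Rmat A q qi n₂) *
          kron (1 : Matrix (Fin n₂) (Fin n₂) A) Tp0) *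
        (kron Tp0 (1 : Matrix (Fin n₁) (Fin n₁) A) * Rmat A q qi n₁) := by
        rw [← one_kron_mul_kron_one Tm1ᵀ Tm1ᵀ, ← one_kron_mul_kron_one Tp0 Tp0]
        simp only [Matrix.mul_assoc]
    _ = kron (1 : Matrix (Fin n₁) (Fin n₁) A) Tm1ᵀ *
        (kron (1 : Matrix (Fin n₁) (Fin n₁) A) Tp0 * ptrans (Rmat A q qi n₁) *
          kron Tm1ᵀ (1 : Matrix (Fin n₁) (Fin n₁) A)) *
        (kron Tp0 (1 : Matrix (Fin n₁) (Fin n₁) A) * Rmat A q qi n₁) := by rw [L3]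
    _ = kron (1 : Matrix (Fin n₁) (Fin n₁) A) (Tm1ᵀ * Tp0) * ptrans (Rmat A q qi n₁) *
        kron (Tm1ᵀ * Tp0) (1 : Matrix (Fin n₁) (Fin n₁) A) * Rmat A q qi n₁ := by
        rw [s1, s2]; simp only [Matrix.mul_assoc]
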